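/- Let π be an LS-path of degree r ≥ 1 over (S, ≤, b). If π_1, …, π_r and π′_1, …, π′_r are two sequences of degree-1 LS-paths, each satisfying max supp π_h ≤ min supp π_{h+1} for all h = 1, …, r−1 (respectively for the π′_h), and π = π_1 + ⋯ + π_r = π′_1 + ⋯ + π′_r pointwise, then π_h = π′_h for every h. In other words, the standard decomposition (canonical form) of an LS-path into degree-1 LS-paths is unique. -/
import Mathlib


open Finset MvPolynomial

/-- `Mf b i` is `M_i = lcm(b_{i-1}, b_i)`, with the convention `b_{-1} = 1`
(the convention `b_N = 1` is imposed as a hypothesis in the statements). -/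
def Mf (b : ℕ → ℕ) (i : ℕ) : ℕ := Nat.lcm (if i = 0 then 1 else b (i - 1)) (b i)

/-- An LS-path of degree `r` over the totally ordered set `{0, …, N}` with bonds `b`:
a function `π : {0,…,N} → ℚ` (modelled as `π : ℕ → ℚ` vanishing above `N`) with
nonnegative values, integrality `b_j·(π 0 + ⋯ + π j) ∈ ℤ` for all `0 ≤ j ≤ N-1`,
and total sum `π 0 + ⋯ + π N = r`. -/
def IsLSPath (N : ℕ) (b : ℕ → ℕ) (r : ℕ) (π : ℕ → ℚ) : Prop :=
  (∀ i, 0 ≤ π i) ∧ (∀ i, N < i → π i = 0) ∧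
  (∀ j < N, ∃ k : ℤ, (b j : ℚ) * (∑ i ∈ Finset.range (j + 1), π i) = k) ∧
  (∑ i ∈ Finset.range (N + 1), π i = r)

/-- `SuppLE π π'` says `max supp π ≤ min supp π'`:
every element of the support of `π` is `≤` every element of the support of `π'`. -/
def SuppLE (π π' : ℕ → ℚ) : Prop := ∀ i j, π i ≠ 0 → π' j ≠ 0 → i ≤ j

/-- Transitive chain of `SuppLE` from consecutive conditions, given nonempty supports. -/
lemma suppLE_chain (r : ℕ) (πs : ℕ → ℕ → ℚ)
    (hne : ∀ h < r, ∃ k, πs h k ≠ 0)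
    (h2 : ∀ h, h + 1 < r → SuppLE (πs h) (πs (h + 1))) :
    ∀ g h, g < h → h < r → SuppLE (πs g) (πs h) := by
  intro g h hgh hhr
  induction h with
  | zero => omega
  | succ n ih =>
    rcases Nat.lt_succ_iff_lt_or_eq.mp hgh with hlt | heq
    · intro i j hi hj
      obtain ⟨k, hk⟩ := hne n (by omega)
      exact le_trans (ih hlt (by omega) i k hi hk) (h2 n hhr k j hk hj)
    · subst heq; exact h2 g hhr

/-- If a finite sequence of values in `[0,1]` has the "staircase" property, then
each value is the clamp of (total sum − index) to `[0,1]`. -/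
lemma clamp_lemma (r : ℕ) (v : ℕ → ℚ)
    (h0 : ∀ g < r, 0 ≤ v g) (h1 : ∀ g < r, v g ≤ 1)
    (hup : ∀ g h, g < h → h < r → v h ≠ 0 → v g = 1)
    (hdn : ∀ g h, g < h → h < r → v g ≠ 1 → v h = 0) :
    ∀ h < r, v h = min 1 (max 0 ((∑ g ∈ Finset.range r, v g) - h)) := by
  intro h hhr
  set t := ∑ g ∈ Finset.range r, v g with ht
  by_cases hv1 : v h = 1
  · have hall : ∀ g ∈ Finset.range (h+1), v g = 1 := by
      intro g hg
      rcases Nat.lt_succ_iff_lt_or_eq.mp (Finset.mem_range.mp hg) with hlt | he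
      · exact hup g h hlt hhr (by rw [hv1]; norm_num)
      · subst he; exact hv1
    have hsum1 : ∑ g ∈ Finset.range (h+1), v g = (h : ℚ) + 1 := by
      rw [Finset.sum_congr rfl hall]; simp
    have hle : (h : ℚ) + 1 ≤ t := by
      rw [← hsum1]
      exact Finset.sum_le_sum_of_subset_of_nonneg
        (Finset.range_subset_range.mpr hhr) (fun i hi _ => h0 i (Finset.mem_range.mp hi))
    rw [hv1, max_eq_right (by linarith), min_eq_left (by linarith)]
  · by_cases hv0 : v h = 0
    · have hall : ∀ g ∈ Finset.range r, g ∉ Finset.range h → v g = 0 := by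
        intro g hg hgn
        have hge : h ≤ g := by simp [Finset.mem_range] at hgn; omega
        rcases eq_or_lt_of_le hge with he | hlt
        · rw [← he]; exact hv0
        · exact hdn h g hlt (Finset.mem_range.mp hg) hv1
      have hts : ∑ g ∈ Finset.range h, v g = t :=
        Finset.sum_subset (Finset.range_subset_range.mpr (le_of_lt hhr)) hall
      have hle : t ≤ (h : ℚ) := by
        rw [← hts]
        calc ∑ g ∈ Finset.range h, v g ≤ ∑ _g ∈ Finset.range h, (1:ℚ) :=
              Finset.sum_le_sum (fun g hg => h1 g (lt_trans (Finset.mem_range.mp hg) hhr))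
          _ = h := by simp
      rw [hv0, max_eq_left (by linarith), min_eq_right (by norm_num)]
    · have hlt1 : v h < 1 := lt_of_le_of_ne (h1 h hhr) hv1
      have hpos : 0 < v h := lt_of_le_of_ne (h0 h hhr) (Ne.symm hv0)
      have hall : ∀ g ∈ Finset.range r, g ∉ Finset.range (h+1) → v g = 0 := by
        intro g hg hgn
        have hlt : h < g := by simp [Finset.mem_range] at hgn; omega
        exact hdn h g hlt (Finset.mem_range.mp hg) hv1
      have ht' : ∑ g ∈ Finset.range (h+1), v g = t :=
        Finset.sum_subset (Finset.range_subset_range.mpr hhr) hall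
      have hones : ∀ g ∈ Finset.range h, v g = 1 := fun g hg =>
        hup g h (Finset.mem_range.mp hg) hhr hv0
      have htv : t = (h : ℚ) + v h := by
        rw [← ht', Finset.sum_range_succ, Finset.sum_congr rfl hones]; simp
      rw [htv]
      have he : (h:ℚ) + v h - h = v h := by ring
      rw [he, max_eq_right (le_of_lt hpos), min_eq_right (le_of_lt hlt1)]

/-- Key lemma: the partial sums of the pieces of a canonical decomposition are clamps
of the partial sums of the total. -/
lemma key_lemma (N : ℕ) (b : ℕ → ℕ) (r : ℕ) (πs : ℕ → ℕ → ℚ)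
    (h1 : ∀ h < r, IsLSPath N b 1 (πs h))
    (h2 : ∀ h, h + 1 < r → SuppLE (πs h) (πs (h + 1))) :
    ∀ h < r, ∀ i, ∑ j ∈ Finset.range (i+1), πs h j =
      min 1 (max 0 ((∑ g ∈ Finset.range r, ∑ j ∈ Finset.range (i+1), πs g j) - h)) := by
  have hne : ∀ h < r, ∃ k, πs h k ≠ 0 := by
    intro h hh
    obtain ⟨hpos, hvan, _, hsum⟩ := h1 h hh
    have : (∑ j ∈ Finset.range (N + 1), πs h j) ≠ 0 := by rw [hsum]; norm_num
    obtain ⟨k, _, hk⟩ := Finset.exists_ne_zero_of_sum_ne_zero this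
    exact ⟨k, hk⟩
  have hchain := suppLE_chain r πs hne h2
  intro h hh i
  -- total over the longer range is still 1
  set T := max (i+1) (N+1) with hT
  have htot : ∀ m < r, ∑ j ∈ Finset.range T, πs m j = 1 := by
    intro m hm
    obtain ⟨hpos, hvan, _, hsum⟩ := h1 m hm
    have : ∑ j ∈ Finset.range (N+1), πs m j = ∑ j ∈ Finset.range T, πs m j := by
      apply Finset.sum_subset (Finset.range_subset_range.mpr (le_max_right _ _))
      intro x hx hnx
      have : N < x := by simp [Finset.mem_range] at hnx ⊢; omega
      exact hvan x this
    rw [← this, hsum]; norm_num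
  refine clamp_lemma r (fun g => ∑ j ∈ Finset.range (i+1), πs g j) ?_ ?_ ?_ ?_ h hh
  · intro g hg
    exact Finset.sum_nonneg (fun j _ => (h1 g hg).1 j)
  · intro g hg
    rw [← htot g hg]
    exact Finset.sum_le_sum_of_subset_of_nonneg
      (Finset.range_subset_range.mpr (le_max_left _ _)) (fun x _ _ => (h1 g hg).1 x)
  · -- hup
    intro g h' hgh' hh'r hne'
    obtain ⟨j, hjmem, hj⟩ := Finset.exists_ne_zero_of_sum_ne_zero hne'
    have hji : j ≤ i := by simpa [Nat.lt_succ_iff] using Finset.mem_range.mp hjmem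
    rw [← htot g (lt_trans hgh' hh'r)]
    apply Finset.sum_subset (Finset.range_subset_range.mpr (le_max_left _ _))
    intro x hx hnx
    have hxi : i < x := by simp [Finset.mem_range] at hnx; omega
    by_contra hxne
    have := hchain g h' hgh' hh'r x j hxne hj
    omega
  · -- hdn
    intro g h' hgh' hh'r hgne
    by_contra hne'
    obtain ⟨j, hjmem, hj⟩ := Finset.exists_ne_zero_of_sum_ne_zero hne'
    have hji : j ≤ i := by simpa [Nat.lt_succ_iff] using Finset.mem_range.mp hjmem
    -- there is a support element of πs g beyond i
    have hiT : i + 1 ≤ T := le_max_left _ _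
    have hsplit : ∑ x ∈ Finset.range (i+1), πs g x + ∑ x ∈ Finset.Ico (i+1) T, πs g x
        = ∑ x ∈ Finset.range T, πs g x := by
      simp only [Finset.range_eq_Ico]
      exact Finset.sum_Ico_consecutive _ (Nat.zero_le _) hiT
    have hIco : ∑ x ∈ Finset.Ico (i+1) T, πs g x ≠ 0 := by
      intro hz
      apply hgne
      rw [← htot g (lt_trans hgh' hh'r), ← hsplit, hz, add_zero]
    obtain ⟨k, hkmem, hk⟩ := Finset.exists_ne_zero_of_sum_ne_zero hIco
    have hki : i + 1 ≤ k := (Finset.mem_Ico.mp hkmem).1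
    have := hchain g h' hgh' hh'r k j hk hj
    omega

/-- Uniqueness of the standard decomposition (canonical form) of an LS-path of degree
`r ≥ 1` into degree-1 LS-paths: if `π = π_1 + ⋯ + π_r = π'_1 + ⋯ + π'_r` pointwise, with
both sequences consisting of degree-1 LS-paths satisfying
`max supp π_h ≤ min supp π_{h+1}`, then `π_h = π'_h` for every `h`. -/
theorem stmt3 (N : ℕ) (hN : 1 ≤ N) (b : ℕ → ℕ) (hb : ∀ i < N, 0 < b i) (hbN : b N = 1)
    (r : ℕ) (hr : 1 ≤ r) (π : ℕ → ℚ) (hπ : IsLSPath N b r π)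
    (πs πs' : ℕ → (ℕ → ℚ))
    (h1 : ∀ h < r, IsLSPath N b 1 (πs h)) (h1' : ∀ h < r, IsLSPath N b 1 (πs' h))
    (h2 : ∀ h, h + 1 < r → SuppLE (πs h) (πs (h + 1)))
    (h2' : ∀ h, h + 1 < r → SuppLE (πs' h) (πs' (h + 1)))
    (hsum : ∀ i, π i = ∑ h ∈ Finset.range r, πs h i)
    (hsum' : ∀ i, π i = ∑ h ∈ Finset.range r, πs' h i) :
    ∀ h < r, πs h = πs' h := by
  have keyπ := key_lemma N b r πs h1 h2
  have keyπ' := key_lemma N b r πs' h1' h2'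
  have htot : ∀ i, ∑ g ∈ Finset.range r, ∑ j ∈ Finset.range (i+1), πs g j
      = ∑ j ∈ Finset.range (i+1), π j := by
    intro i
    rw [Finset.sum_comm]
    exact Finset.sum_congr rfl (fun j _ => (hsum j).symm)
  have htot' : ∀ i, ∑ g ∈ Finset.range r, ∑ j ∈ Finset.range (i+1), πs' g j
      = ∑ j ∈ Finset.range (i+1), π j := by
    intro i
    rw [Finset.sum_comm]
    exact Finset.sum_congr rfl (fun j _ => (hsum' j).symm)
  have hS : ∀ m < r, ∀ i, ∑ j ∈ Finset.range (i+1), πs m j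
      = ∑ j ∈ Finset.range (i+1), πs' m j := by
    intro m hm i
    rw [keyπ m hm i, keyπ' m hm i, htot i, htot' i]
  intro h hh
  funext i
  cases i with
  | zero =>
    have := hS h hh 0
    simpa using this
  | succ n =>
    have e1 := hS h hh (n+1)
    have e2 := hS h hh n
    have e1' : ∑ j ∈ Finset.range (n+1), πs h j + πs h (n+1)
        = ∑ j ∈ Finset.range (n+1), πs' h j + πs' h (n+1) := by
      rw [← Finset.sum_range_succ, ← Finset.sum_range_succ]; exact e1
    linarith
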